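/- arXiv:2309.10420 — 2 statements merged into one kernel-verified Lean document; each statement's English description precedes it below -/
import Mathlib

section
/- Norm conjugate formula: let p(·) : ℝⁿ → [1,∞) be a measurable exponent with 1 < p⁻ ≤ p⁺ < ∞ and let p'(·) be its pointwise conjugate, 1/p(x) + 1/p'(x) = 1. Then for every measurable f : ℝⁿ → ℝ one has ‖f‖_{L^{p(·)}} ≤ sup { ∫_{ℝⁿ} |f(x)| |g(x)| dx : g measurable with ‖g‖_{L^{p'(·)}} ≤ 1 }. -/
open MeasureTheory ENNReal

/-- The Luxemburg norm of an `ℝ≥0∞`-valued function for a variable exponent `p`: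
`inf {λ > 0 : ∫ (f x / λ)^{p x} dμ ≤ 1}`. -/
noncomputable def luxNormE {α : Type*} [MeasurableSpace α] (μ : Measure α)
    (p : α → ℝ) (f : α → ℝ≥0∞) : ℝ≥0∞ :=
  sInf {l : ℝ≥0∞ | 0 < l ∧ ∫⁻ x, (f x / l) ^ (p x) ∂μ ≤ 1}

/-- The Luxemburg norm `‖f‖_{L^{p(·)}(μ)}` of a real-valued function. -/
noncomputable def luxNorm {α : Type*} [MeasurableSpace α] (μ : Measure α)
    (p : α → ℝ) (f : α → ℝ) : ℝ≥0∞ :=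
  luxNormE μ p (fun x => ENNReal.ofReal |f x|)

/-- The Hardy-Littlewood maximal function: supremum over open balls containing `x`
of the mean of `|f|` over the ball. -/
noncomputable def maximalFn {n : ℕ} (f : EuclideanSpace ℝ (Fin n) → ℝ)
    (x : EuclideanSpace ℝ (Fin n)) : ℝ≥0∞ :=
  ⨆ (c : EuclideanSpace ℝ (Fin n)) (r : ℝ) (_ : x ∈ Metric.ball c r),
    (volume (Metric.ball c r))⁻¹ * ∫⁻ y in Metric.ball c r, ENNReal.ofReal |f y|

/-- The Riesz potential `I_σ f (x) = ∫ |f y| |x-y|^{σ-n} dy`. -/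
noncomputable def rieszPot {n : ℕ} (σ : ℝ) (f : EuclideanSpace ℝ (Fin n) → ℝ)
    (x : EuclideanSpace ℝ (Fin n)) : ℝ≥0∞ :=
  ∫⁻ y, ENNReal.ofReal |f y| * ENNReal.ofReal (‖x - y‖ ^ (σ - (n : ℝ)))

/-- The class `P^log(ℝⁿ)` of log-Hölder continuous exponents: there are `C > 0` and
`p_∞ ∈ [1,∞)` with `|1/p(x) - 1/p(y)| ≤ C/log(e + 1/|x-y|)` and
`|1/p(x) - 1/p_∞| ≤ C/log(e + |x|)`. -/
def IsPLog {n : ℕ} (p : EuclideanSpace ℝ (Fin n) → ℝ) : Prop :=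
  ∃ C > 0, ∃ pinf : ℝ, 1 ≤ pinf ∧
    (∀ x y, x ≠ y → |1 / p x - 1 / p y| ≤ C / Real.log (Real.exp 1 + 1 / ‖x - y‖)) ∧
    (∀ x, |1 / p x - 1 / pinf| ≤ C / Real.log (Real.exp 1 + ‖x‖))

/-- The class `P^log([0,∞))` of log-Hölder continuous exponents on the half-line. -/
def IsPLogHalfline (p : ℝ → ℝ) : Prop :=
  ∃ C > 0, ∃ pinf : ℝ, 1 ≤ pinf ∧
    (∀ t ∈ Set.Ici (0 : ℝ), ∀ s ∈ Set.Ici (0 : ℝ), t ≠ s →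
      |1 / p t - 1 / p s| ≤ C / Real.log (Real.exp 1 + 1 / |t - s|)) ∧
    (∀ t ∈ Set.Ici (0 : ℝ), |1 / p t - 1 / pinf| ≤ C / Real.log (Real.exp 1 + t))

/-- The heat kernel on `ℝ³`: `g_t(x) = (4πt)^{-3/2} exp(-|x|²/(4t))`. -/
noncomputable def heatKernel (t : ℝ) (x : EuclideanSpace ℝ (Fin 3)) : ℝ :=
  (4 * Real.pi * t) ^ (-(3 : ℝ) / 2) * Real.exp (-‖x‖ ^ 2 / (4 * t))

/-- **Norm conjugate formula.** For a measurable exponent `p : ℝⁿ → [1,∞)` with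
`1 < p⁻ ≤ p⁺ < ∞` and its pointwise conjugate `p'` (`1/p(x) + 1/p'(x) = 1`), every
measurable `f` satisfies
`‖f‖_{L^{p(·)}} ≤ sup {∫ |f||g| : g measurable, ‖g‖_{L^{p'(·)}} ≤ 1}`. -/
theorem stmt3 (n : ℕ) (p p' : EuclideanSpace ℝ (Fin n) → ℝ)
    (hpmeas : Measurable p)
    (pm pp : ℝ) (hpm : 1 < pm)
    (hbd : ∀ᵐ x ∂(volume : Measure (EuclideanSpace ℝ (Fin n))), pm ≤ p x ∧ p x ≤ pp)
    (hconj : ∀ x, 1 / p x + 1 / p' x = 1)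
    (f : EuclideanSpace ℝ (Fin n) → ℝ) (hf : Measurable f) :
    luxNorm volume p f ≤
      ⨆ (g : EuclideanSpace ℝ (Fin n) → ℝ) (_ : Measurable g)
        (_ : luxNorm volume p' g ≤ 1),
          ∫⁻ x, ENNReal.ofReal |f x| * ENNReal.ofReal |g x| := by
  classical
  by_contra hcon
  push_neg at hcon
  obtain ⟨l, hSl, hlN⟩ := exists_between hcon
  have hl0 : 0 < l := lt_of_le_of_lt zero_le hSl
  have hlt : l ≠ ⊤ := hlN.ne_top
  set pq : ℝ := max pp pm with hpq
  have hbd' : ∀ᵐ x ∂(volume : Measure (EuclideanSpace ℝ (Fin n))), pm ≤ p x ∧ p x ≤ pq := by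
    filter_upwards [hbd] with x hx
    exact ⟨hx.1, hx.2.trans (le_max_left _ _)⟩
  have hpmq : pm ≤ pq := le_max_right _ _
  have hpm0 : (0:ℝ) < pm := lt_trans one_pos hpm
  -- `l` is not in the defining set of the Luxemburg norm
  have hmod : 1 < ∫⁻ x, (ENNReal.ofReal |f x| / l) ^ (p x) := by
    by_contra h
    push_neg at h
    have hle : luxNorm volume p f ≤ l := by
      simp only [luxNorm, luxNormE]
      exact sInf_le ⟨hl0, h⟩
    exact absurd hlN (hle.trans_lt hlN).false.elim
  -- truncations
  set Fm : ℕ → EuclideanSpace ℝ (Fin n) → ℝ :=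
    fun m x => if ‖x‖ < (m:ℝ) ∧ |f x| ≤ (m:ℝ) then |f x| else 0 with hFm
  have hFmeas : ∀ m, Measurable (Fm m) := by
    intro m
    have hs : MeasurableSet {x : EuclideanSpace ℝ (Fin n) | ‖x‖ < (m:ℝ) ∧ |f x| ≤ (m:ℝ)} := by
      have : {x : EuclideanSpace ℝ (Fin n) | ‖x‖ < (m:ℝ) ∧ |f x| ≤ (m:ℝ)}
          = {x | ‖x‖ < (m:ℝ)} ∩ {x | |f x| ≤ (m:ℝ)} := rfl
      rw [this]
      exact (measurableSet_lt measurable_norm measurable_const).inter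
        (measurableSet_le hf.abs measurable_const)
    exact Measurable.ite hs hf.abs measurable_const
  have hFnn : ∀ m x, 0 ≤ Fm m x := by
    intro m x
    by_cases h : ‖x‖ < (m:ℝ) ∧ |f x| ≤ (m:ℝ) <;> simp [hFm, h, abs_nonneg]
  have hFle : ∀ m x, Fm m x ≤ |f x| := by
    intro m x
    by_cases h : ‖x‖ < (m:ℝ) ∧ |f x| ≤ (m:ℝ) <;> simp [hFm, h, abs_nonneg]
  have hFlem : ∀ m x, Fm m x ≤ (m:ℝ) := by
    intro m x
    by_cases h : ‖x‖ < (m:ℝ) ∧ |f x| ≤ (m:ℝ)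
    · simp [hFm, h, h.2]
    · simp [hFm, h, Nat.cast_nonneg]
  have hFmono : ∀ x, Monotone fun m => Fm m x := by
    intro x m m' hmm'
    simp only [hFm]
    by_cases h : ‖x‖ < (m:ℝ) ∧ |f x| ≤ (m:ℝ)
    · have h' : ‖x‖ < (m':ℝ) ∧ |f x| ≤ (m':ℝ) :=
        ⟨h.1.trans_le (Nat.cast_le.mpr hmm'), h.2.trans (Nat.cast_le.mpr hmm')⟩
      rw [if_pos h, if_pos h']
    · rw [if_neg h]
      by_cases h' : ‖x‖ < (m':ℝ) ∧ |f x| ≤ (m':ℝ)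
      · rw [if_pos h']; exact abs_nonneg _
      · rw [if_neg h']
  have hmon2 : ∀ᵐ x ∂(volume : Measure (EuclideanSpace ℝ (Fin n))),
      Monotone fun m : ℕ => (ENNReal.ofReal (Fm m x) / l) ^ (p x) := by
    filter_upwards [hbd'] with x hx
    intro m m' hmm'
    exact ENNReal.rpow_le_rpow
      (ENNReal.div_le_div_right (ENNReal.ofReal_le_ofReal (hFmono x hmm')) l)
      (hpm0.le.trans hx.1)
  have hsup : ∀ᵐ x ∂(volume : Measure (EuclideanSpace ℝ (Fin n))),
      (⨆ m : ℕ, (ENNReal.ofReal (Fm m x) / l) ^ (p x))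
        = (ENNReal.ofReal |f x| / l) ^ (p x) := by
    filter_upwards [hbd'] with x hx
    have hp0 : 0 ≤ p x := hpm0.le.trans hx.1
    apply le_antisymm
    · exact iSup_le fun m => ENNReal.rpow_le_rpow
        (ENNReal.div_le_div_right (ENNReal.ofReal_le_ofReal (hFle m x)) l) hp0
    · obtain ⟨M, hM⟩ := exists_nat_gt (max ‖x‖ |f x|)
      have hMx : Fm M x = |f x| := by
        simp only [hFm]
        rw [if_pos ⟨(le_max_left _ _).trans_lt hM, (le_max_right _ _).trans hM.le⟩]
      have := le_iSup (fun m : ℕ => (ENNReal.ofReal (Fm m x) / l) ^ (p x)) M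
      rw [hMx] at this
      exact this
  have hswap : (∫⁻ x, (ENNReal.ofReal |f x| / l) ^ (p x))
      = ⨆ m : ℕ, ∫⁻ x, (ENNReal.ofReal (Fm m x) / l) ^ (p x) := by
    rw [← lintegral_iSup'
      (fun m => (((hFmeas m).ennreal_ofReal.div_const l).pow hpmeas).aemeasurable) hmon2]
    exact lintegral_congr_ae (hsup.mono fun x hx => hx.symm)
  rw [hswap, lt_iSup_iff] at hmod
  obtain ⟨m, hm⟩ := hmod
  set h : EuclideanSpace ℝ (Fin n) → ℝ≥0∞ :=
    fun x => (ENNReal.ofReal (Fm m x) / l) ^ (p x) with hh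
  set ρ : ℝ≥0∞ := ∫⁻ x, h x with hρ
  have hρ1 : 1 < ρ := hm
  set b : ℝ≥0∞ := ENNReal.ofReal (m:ℝ) / l with hb
  have hbne : b ≠ ⊤ := (ENNReal.div_lt_top ENNReal.ofReal_ne_top hl0.ne').ne
  have hρtop : ρ < ⊤ := by
    have hbound : ∀ᵐ x ∂(volume : Measure (EuclideanSpace ℝ (Fin n))),
        h x ≤ (Metric.ball (0:EuclideanSpace ℝ (Fin n)) (m:ℝ)).indicator
          (fun _ => b ^ pm + b ^ pq) x := by
      filter_upwards [hbd'] with x hx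
      by_cases hxm : x ∈ Metric.ball (0:EuclideanSpace ℝ (Fin n)) (m:ℝ)
      · rw [Set.indicator_of_mem hxm]
        have h1 : h x ≤ b ^ (p x) := by
          exact ENNReal.rpow_le_rpow
            (ENNReal.div_le_div_right (ENNReal.ofReal_le_ofReal (hFlem m x)) l)
            (hpm0.le.trans hx.1)
        refine h1.trans ?_
        rcases le_or_gt b 1 with hb1 | hb1
        · exact le_add_of_le_of_nonneg
            (ENNReal.rpow_le_rpow_of_exponent_ge hb1 hx.1) zero_le
        · exact le_add_of_nonneg_of_le zero_le
            (ENNReal.rpow_le_rpow_of_exponent_le hb1.le hx.2)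
      · rw [Set.indicator_of_notMem hxm]
        have hFx : Fm m x = 0 := by
          simp only [hFm]
          rw [if_neg]
          intro hcond
          exact hxm (mem_ball_zero_iff.mpr hcond.1)
        simp only [hh, hFx]
        simp [ENNReal.zero_rpow_of_pos (hpm0.trans_le hx.1)]
    have hle2 : ρ ≤ (b ^ pm + b ^ pq) * volume (Metric.ball (0:EuclideanSpace ℝ (Fin n)) (m:ℝ)) := by
      refine le_trans (lintegral_mono_ae hbound) ?_
      rw [lintegral_indicator measurableSet_ball, setLIntegral_const]
    refine lt_of_le_of_lt hle2 ?_
    exact ENNReal.mul_lt_top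
        (ENNReal.add_lt_top.mpr
          ⟨ENNReal.rpow_lt_top_of_nonneg hpm0.le hbne,
           ENNReal.rpow_lt_top_of_nonneg (hpm0.le.trans hpmq) hbne⟩)
        measure_ball_lt_top
  have hρ0 : ρ ≠ 0 := (lt_trans zero_lt_one hρ1).ne'
  have hρt : ρ ≠ ⊤ := hρtop.ne
  set ρr : ℝ := ρ.toReal with hρrd
  have hρr1 : 1 ≤ ρr := by
    have := ENNReal.toReal_mono hρt hρ1.le
    simpa using this
  have hρrpos : 0 < ρr := lt_of_lt_of_le one_pos hρr1
  set lr : ℝ := l.toReal with hlrd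
  have hlr0 : 0 < lr := ENNReal.toReal_pos hl0.ne' hlt
  have hlofReal : ENNReal.ofReal lr = l := ENNReal.ofReal_toReal hlt
  have hρofReal : ENNReal.ofReal ρr = ρ := ENNReal.ofReal_toReal hρt
  set g : EuclideanSpace ℝ (Fin n) → ℝ :=
    fun x => (Fm m x / lr) ^ (p x - 1) / ρr with hg
  have hgmeas : Measurable g :=
    (((hFmeas m).div_const lr).pow (hpmeas.sub measurable_const)).div_const ρr
  have hgnn : ∀ x, 0 ≤ g x := fun x =>
    div_nonneg (Real.rpow_nonneg (div_nonneg (hFnn m x) hlr0.le) _) hρrpos.le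
  -- key identity for `ofReal (g x)`
  have hkey : ∀ x, pm ≤ p x →
      ENNReal.ofReal (g x) = (ENNReal.ofReal (Fm m x) / l) ^ (p x - 1) / ρ := by
    intro x hx1
    have hpx1 : (0:ℝ) ≤ p x - 1 := by
      have : 1 < p x := hpm.trans_le hx1
      linarith
    simp only [hg]
    rw [ENNReal.ofReal_div_of_pos hρrpos, hρofReal]
    congr 1
    rw [← ENNReal.ofReal_rpow_of_nonneg (div_nonneg (hFnn m x) hlr0.le) hpx1]
    congr 1
    rw [ENNReal.ofReal_div_of_pos hlr0, hlofReal]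
  -- conjugate exponent facts
  have hp'fact : ∀ x, pm ≤ p x → (p x - 1) * p' x = p x ∧ 1 ≤ p' x := by
    intro x hx
    have hpx1 : 1 < p x := hpm.trans_le hx
    have hpx0 : 0 < p x := lt_trans one_pos hpx1
    have hpxm1 : 0 < p x - 1 := by linarith
    have h1 : 1 / p' x = (p x - 1) / p x := by
      have h2 := hconj x
      have h3 : 1 / p' x = 1 - 1 / p x := by linarith
      rw [h3]
      field_simp
    have hp'pos : 0 < p' x := by
      have : 0 < 1 / p' x := h1 ▸ div_pos hpxm1 hpx0
      exact one_div_pos.mp this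
    have hp'eq : p' x = p x / (p x - 1) := by
      have h4 : p' x = (1 / p' x)⁻¹ := by rw [one_div, inv_inv]
      rw [h4, h1, inv_div]
    constructor
    · rw [hp'eq, mul_comm, div_mul_cancel₀ _ hpxm1.ne']
    · rw [hp'eq, le_div_iff₀ hpxm1]
      linarith
  -- the dual function has Luxemburg norm ≤ 1
  have hgmod : ∫⁻ x, (ENNReal.ofReal |g x| / 1) ^ (p' x) ≤ 1 := by
    have hpt : ∀ᵐ x ∂(volume : Measure (EuclideanSpace ℝ (Fin n))),
        (ENNReal.ofReal |g x| / 1) ^ (p' x) ≤ h x * ρ⁻¹ := by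
      filter_upwards [hbd'] with x hx
      obtain ⟨hmul, hp'1⟩ := hp'fact x hx.1
      rw [div_one, abs_of_nonneg (hgnn x), hkey x hx.1,
        ENNReal.div_rpow_of_nonneg _ _ (zero_le_one.trans hp'1),
        ← ENNReal.rpow_mul, hmul]
      have hρle : ρ ≤ ρ ^ (p' x) := by
        conv_lhs => rw [← ENNReal.rpow_one ρ]
        exact ENNReal.rpow_le_rpow_of_exponent_le hρ1.le hp'1
      simp only [hh]
      rw [div_eq_mul_inv]
      exact mul_le_mul_right (ENNReal.inv_le_inv.mpr hρle) _
    calc (∫⁻ x, (ENNReal.ofReal |g x| / 1) ^ (p' x))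
        ≤ ∫⁻ x, h x * ρ⁻¹ := lintegral_mono_ae hpt
    _ = ρ * ρ⁻¹ := by
        rw [lintegral_mul_const' _ _ (ENNReal.inv_ne_top.mpr hρ0), ← hρ]
    _ = 1 := ENNReal.mul_inv_cancel hρ0 hρt
  have hgnorm : luxNorm volume p' g ≤ 1 := by
    simp only [luxNorm, luxNormE]
    exact sInf_le ⟨zero_lt_one, hgmod⟩
  -- lower bound: the pairing with g is at least l
  have hlow : l ≤ ∫⁻ x, ENNReal.ofReal |f x| * ENNReal.ofReal |g x| := by
    have hpt : ∀ᵐ x ∂(volume : Measure (EuclideanSpace ℝ (Fin n))),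
        l / ρ * h x ≤ ENNReal.ofReal |f x| * ENNReal.ofReal |g x| := by
      filter_upwards [hbd'] with x hx
      have hp0 : 0 < p x := lt_trans one_pos (hpm.trans_le hx.1)
      rw [abs_of_nonneg (hgnn x), hkey x hx.1]
      by_cases hF : Fm m x = 0
      · simp only [hh, hF]
        simp [ENNReal.zero_rpow_of_pos hp0]
      · have hFpos : 0 < Fm m x := lt_of_le_of_ne (hFnn m x) (Ne.symm hF)
        set a : ℝ≥0∞ := ENNReal.ofReal (Fm m x) with ha
        have ha0 : a ≠ 0 := by
          simpa [ha] using (ENNReal.ofReal_pos.mpr hFpos).ne'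
        have hat : a ≠ ⊤ := ENNReal.ofReal_ne_top
        have hal0 : a / l ≠ 0 := by
          simp [ENNReal.div_eq_zero_iff, ha0, hlt]
        have halt : a / l ≠ ⊤ := (ENNReal.div_lt_top hat hl0.ne').ne
        have hsplit : (a / l) ^ (p x) = (a / l) * (a / l) ^ (p x - 1) := by
          calc (a / l) ^ (p x) = (a / l) ^ ((1:ℝ) + (p x - 1)) := by
                rw [show (1:ℝ) + (p x - 1) = p x from by ring]
          _ = (a / l) ^ (1:ℝ) * (a / l) ^ (p x - 1) := ENNReal.rpow_add _ _ hal0 halt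
          _ = (a / l) * (a / l) ^ (p x - 1) := by rw [ENNReal.rpow_one]
        refine le_trans (le_of_eq ?_)
          (mul_le_mul_left (ENNReal.ofReal_le_ofReal (hFle m x)) _)
        simp only [hh]
        rw [hsplit, div_eq_mul_inv, div_eq_mul_inv, div_eq_mul_inv,
          show l * ρ⁻¹ * (a * l⁻¹ * (a * l⁻¹) ^ (p x - 1)) =
            l * l⁻¹ * (a * ((a * l⁻¹) ^ (p x - 1) * ρ⁻¹)) from by ring,
          ENNReal.mul_inv_cancel hl0.ne' hlt, one_mul]
    calc l = l / ρ * ρ := (ENNReal.div_mul_cancel hρ0 hρt).symm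
    _ = l / ρ * ∫⁻ x, h x := by rw [← hρ]
    _ = ∫⁻ x, l / ρ * h x := (lintegral_const_mul' _ _ (ENNReal.div_lt_top hlt hρ0).ne).symm
    _ ≤ _ := lintegral_mono_ae hpt
  refine absurd (hlow.trans ?_) hSl.not_ge
  refine le_iSup_of_le g ?_
  refine le_iSup_of_le hgmeas ?_
  exact le_iSup_of_le hgnorm le_rfl
end

section
/- Pointwise Duhamel estimate via the Riesz potential: there exists a constant C > 0 such that for every measurable v : (0,∞) × ℝ³ → [0,∞), every t > 0 and every x ∈ ℝ³, ∫₀^t ∫_{ℝ³} |∇g_{t−s}(x−y)| v(s,y) dy ds ≤ C ∫_{ℝ³} |x−y|^{−2} (ess sup_{s>0} v(s,y)) dy, where g_t is the heat kernel on ℝ³. -/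
open MeasureTheory ENNReal

section DuhamelHelpers

open Set

abbrev E3 := EuclideanSpace ℝ (Fin 3)

lemma heatKernel_pos {t : ℝ} (ht : 0 < t) (z : E3) : 0 < heatKernel t z := by
  unfold heatKernel
  positivity

lemma grad_hk {t : ℝ} (ht : 0 < t) (z : E3) :
    HasGradientAt (heatKernel t) ((heatKernel t z * (-(2 * t)⁻¹)) • z) z := by
  rw [hasGradientAt_iff_hasFDerivAt]
  have h1 : HasFDerivAt (fun x : E3 => ‖x‖ ^ 2) (2 • (innerSL ℝ z)) z := by
    simpa using (hasFDerivAt_id z).norm_sq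
  have h2 : HasFDerivAt (fun x : E3 => -‖x‖ ^ 2 / (4 * t))
      ((-(4 * t)⁻¹) • (2 • (innerSL ℝ z))) z := by
    have h := h1.neg.const_smul (𝕜 := ℝ) (R := ℝ) ((4 * t)⁻¹)
    have heq : ((4 * t)⁻¹ • -(fun x : E3 => ‖x‖ ^ 2)) = (fun x : E3 => -‖x‖ ^ 2 / (4 * t)) := by
      funext x; simp [smul_eq_mul]; ring
    rw [heq] at h
    refine h.congr_fderiv ?_
    ext w
    simp [smul_eq_mul]
  have h3 := h2.exp.const_mul ((4 * Real.pi * t) ^ (-(3 : ℝ) / 2))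
  refine h3.congr_fderiv ?_
  ext w
  simp [heatKernel, InnerProductSpace.toDual_apply_apply, real_inner_smul_left]
  ring

lemma norm_grad_hk {t : ℝ} (ht : 0 < t) (z : E3) :
    ‖gradient (heatKernel t) z‖ = heatKernel t z * ((2 * t)⁻¹ * ‖z‖) := by
  rw [(grad_hk ht z).gradient, norm_smul]
  rw [Real.norm_eq_abs, abs_mul, abs_of_pos (heatKernel_pos ht z), abs_neg, abs_inv,
    abs_of_pos (by linarith : (0:ℝ) < 2 * t)]
  ring

lemma hk_nonpos {t : ℝ} (ht : t ≤ 0) (z : E3) : heatKernel t z = 0 := by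
  unfold heatKernel
  rcases eq_or_lt_of_le ht with h | h
  · rw [h]; norm_num [Real.zero_rpow]
  · rw [Real.rpow_def_of_neg (by have := Real.pi_pos; nlinarith)]
    have : (-(3:ℝ)/2) * Real.pi = Real.pi/2 - 2*Real.pi := by ring
    rw [this, Real.cos_sub_two_pi, Real.cos_pi_div_two]
    ring

lemma sq_le_exp {u : ℝ} (hu : 0 ≤ u) : u ^ 2 ≤ Real.exp u := by
  have h := Real.add_one_le_exp (u/4)
  have h2 : (1 + u/4) ^ 4 ≤ Real.exp (u/4) ^ 4 := by
    apply pow_le_pow_left₀ (by positivity)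
    linarith
  have h3 : Real.exp (u/4) ^ 4 = Real.exp u := by
    rw [← Real.exp_nat_mul]; congr 1; push_cast; ring
  nlinarith [sq_nonneg (1 - u/4), sq_nonneg (1 + u/4), sq_nonneg u]

lemma exp_neg_le {u : ℝ} (hu : 0 < u) : Real.exp (-u) ≤ (u ^ 2)⁻¹ := by
  rw [Real.exp_neg]
  apply inv_anti₀ (by positivity) (sq_le_exp hu.le)

-- shift invariance
lemma lintegral_shift (G : ℝ → ℝ≥0∞) (t : ℝ) : ∫⁻ s, G (t - s) = ∫⁻ s, G s := by
  calc ∫⁻ s, G (t - s) = ∫⁻ s, (fun u => G (t + u)) (-s) := by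
        simp [sub_eq_add_neg]
    _ = ∫⁻ u, G (t + u) := by
        have : (volume : Measure ℝ) = Measure.map (MeasurableEquiv.neg ℝ) volume := by
          simp [Measure.map_neg_eq_self]
        conv_rhs => rw [this]
        rw [lintegral_map_equiv]
        rfl
    _ = ∫⁻ s, G s := lintegral_add_left_eq_self _ t

lemma lint_Ioi {a : ℝ} (ha : 0 < a) :
    ∫⁻ τ in Ioi a, ENNReal.ofReal (τ ^ (-(5:ℝ)/2)) = ENNReal.ofReal (2/3 * a ^ (-(3:ℝ)/2)) := by
  rw [← ofReal_integral_eq_lintegral_ofReal (integrableOn_Ioi_rpow_of_lt (by norm_num) ha)]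
  · rw [integral_Ioi_rpow_of_lt (by norm_num) ha]
    norm_num
    rw [← ENNReal.ofReal_mul (by norm_num)]
    congr 1
    ring
  · filter_upwards [ae_restrict_mem measurableSet_Ioi] with τ hτ
    exact Real.rpow_nonneg (le_of_lt (ha.trans hτ)) _

lemma lint_Ioc {b : ℝ} (hb : 0 < b) :
    ∫⁻ τ in Ioc 0 b, ENNReal.ofReal (τ ^ (-(1:ℝ)/2)) = ENNReal.ofReal (2 * b ^ ((1:ℝ)/2)) := by
  have hi : IntegrableOn (fun τ : ℝ => τ ^ (-(1:ℝ)/2)) (Ioc 0 b) :=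
    (intervalIntegral.intervalIntegrable_rpow' (by norm_num)).1
  rw [← ofReal_integral_eq_lintegral_ofReal hi]
  · rw [← intervalIntegral.integral_of_le hb.le,
      integral_rpow (Or.inl (by norm_num))]
    norm_num [Real.zero_rpow]
    ring_nf
    rw [ENNReal.ofReal_mul (by positivity)]
    simp
  · filter_upwards [ae_restrict_mem measurableSet_Ioc] with τ hτ
    exact Real.rpow_nonneg hτ.1.le _

lemma timeInt (z : E3) (t : ℝ) :
    ∫⁻ s in Ioo 0 t, ENNReal.ofReal (heatKernel (t - s) z * ((2 * (t - s))⁻¹ * ‖z‖))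
      ≤ ENNReal.ofReal ((4 * Real.pi) ^ (-(3:ℝ)/2) * 17) * ENNReal.ofReal (‖z‖ ^ (-(2:ℝ))) := by
  set G : ℝ → ℝ≥0∞ := fun τ => ENNReal.ofReal (heatKernel τ z * ((2 * τ)⁻¹ * ‖z‖)) with hG
  have hG0 : ∀ τ ≤ 0, G τ = 0 := by
    intro τ hτ
    simp [hG, hk_nonpos hτ z]
  have step1 : ∫⁻ s in Ioo 0 t, G (t - s) ≤ ∫⁻ τ in Ioi 0, G τ := by
    calc ∫⁻ s in Ioo 0 t, G (t - s) ≤ ∫⁻ s, G (t - s) := setLIntegral_le_lintegral _ _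
      _ = ∫⁻ τ, G τ := lintegral_shift G t
      _ = ∫⁻ τ, (Ioi (0:ℝ)).indicator G τ := by
          apply lintegral_congr
          intro τ
          by_cases h : τ ∈ Ioi (0:ℝ)
          · rw [indicator_of_mem h]
          · rw [indicator_of_notMem h, hG0 τ (by simpa using h)]
      _ = ∫⁻ τ in Ioi 0, G τ := lintegral_indicator measurableSet_Ioi _
  rcases eq_or_ne z 0 with rfl | hz
  · refine le_trans (le_of_eq ?_) zero_le
    simp
  have hr : (0:ℝ) < ‖z‖ := norm_pos_iff.2 hz
  set r := ‖z‖
  set p := (-(3:ℝ)/2)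
  have hp4 : (0:ℝ) < (4 * Real.pi) ^ p := Real.rpow_pos_of_pos (by positivity) _
  -- pointwise bounds
  have bnd1 : ∀ τ ∈ Ioc (0:ℝ) (r ^ 2), G τ ≤
      ENNReal.ofReal ((4 * Real.pi) ^ p * 8 * (r ^ 3)⁻¹ * τ ^ (-(1:ℝ)/2)) := by
    intro τ hτ
    have hτ0 : (0:ℝ) < τ := hτ.1
    apply ENNReal.ofReal_le_ofReal
    unfold heatKernel
    rw [Real.mul_rpow (by positivity) hτ0.le]
    have he : Real.exp (-r ^ 2 / (4 * τ)) ≤ 16 * τ ^ 2 / (r ^ 2) ^ 2 := by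
      have h := exp_neg_le (u := r ^ 2 / (4 * τ)) (by positivity)
      calc Real.exp (-r ^ 2 / (4 * τ)) = Real.exp (-(r ^ 2 / (4 * τ))) := by rw [neg_div]
        _ ≤ ((r ^ 2 / (4 * τ)) ^ 2)⁻¹ := h
        _ = 16 * τ ^ 2 / (r ^ 2) ^ 2 := by field_simp; ring
    have e1 : τ ^ p = τ ^ (-(1:ℝ)/2) * τ⁻¹ := by
      rw [← Real.rpow_neg_one τ, ← Real.rpow_add hτ0]
      norm_num [p]
    rw [e1]
    have h1 : (0:ℝ) ≤ τ ^ (-(1:ℝ)/2) := Real.rpow_nonneg hτ0.le _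
    calc (4 * Real.pi) ^ p * (τ ^ (-(1:ℝ)/2) * τ⁻¹) * Real.exp (-r ^ 2 / (4 * τ)) * ((2 * τ)⁻¹ * r)
        ≤ (4 * Real.pi) ^ p * (τ ^ (-(1:ℝ)/2) * τ⁻¹) * (16 * τ ^ 2 / (r ^ 2) ^ 2) * ((2 * τ)⁻¹ * r) := by
          apply mul_le_mul_of_nonneg_right _ (by positivity)
          apply mul_le_mul_of_nonneg_left he (by positivity)
      _ = (4 * Real.pi) ^ p * 8 * (r ^ 3)⁻¹ * τ ^ (-(1:ℝ)/2) := by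
          field_simp
          ring
  have bnd2 : ∀ τ ∈ Ioi (r ^ 2), G τ ≤
      ENNReal.ofReal ((4 * Real.pi) ^ p * (r / 2) * τ ^ (-(5:ℝ)/2)) := by
    intro τ hτ
    have hτ0 : (0:ℝ) < τ := lt_trans (by positivity) hτ
    apply ENNReal.ofReal_le_ofReal
    unfold heatKernel
    rw [Real.mul_rpow (by positivity) hτ0.le]
    have he : Real.exp (-r ^ 2 / (4 * τ)) ≤ 1 := by
      apply Real.exp_le_one_iff.2
      have : (0:ℝ) < 4 * τ := by linarith
      rw [neg_div]
      simp only [Left.neg_nonpos_iff]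
      positivity
    have e1 : τ ^ (-(5:ℝ)/2) = τ ^ p * τ⁻¹ := by
      rw [← Real.rpow_neg_one τ, ← Real.rpow_add hτ0]
      norm_num [p]
    rw [e1]
    have h1 : (0:ℝ) ≤ τ ^ p := Real.rpow_nonneg hτ0.le _
    calc (4 * Real.pi) ^ p * τ ^ p * Real.exp (-r ^ 2 / (4 * τ)) * ((2 * τ)⁻¹ * r)
        ≤ (4 * Real.pi) ^ p * τ ^ p * 1 * ((2 * τ)⁻¹ * r) := by
          apply mul_le_mul_of_nonneg_right _ (by positivity)
          apply mul_le_mul_of_nonneg_left he (by positivity)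
      _ = (4 * Real.pi) ^ p * (r / 2) * (τ ^ p * τ⁻¹) := by field_simp
  -- split the integral
  have hsplit : ∫⁻ τ in Ioi (0:ℝ), G τ =
      (∫⁻ τ in Ioc (0:ℝ) (r ^ 2), G τ) + ∫⁻ τ in Ioi (r ^ 2), G τ := by
    rw [← lintegral_union measurableSet_Ioi]
    · rw [Ioc_union_Ioi_eq_Ioi (by positivity : (0:ℝ) ≤ r ^ 2)]
    · exact Ioc_disjoint_Ioi le_rfl
  have int1 : ∫⁻ τ in Ioc (0:ℝ) (r ^ 2), G τ ≤
      ENNReal.ofReal ((4 * Real.pi) ^ p * 16 * r ^ (-(2:ℝ))) := by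
    calc ∫⁻ τ in Ioc (0:ℝ) (r ^ 2), G τ
        ≤ ∫⁻ τ in Ioc (0:ℝ) (r ^ 2),
            ENNReal.ofReal ((4 * Real.pi) ^ p * 8 * (r ^ 3)⁻¹) * ENNReal.ofReal (τ ^ (-(1:ℝ)/2)) := by
          apply setLIntegral_mono' measurableSet_Ioc
          intro τ hτ
          rw [← ENNReal.ofReal_mul (by positivity)]
          exact bnd1 τ hτ
      _ = ENNReal.ofReal ((4 * Real.pi) ^ p * 8 * (r ^ 3)⁻¹) *
            ENNReal.ofReal (2 * (r ^ 2) ^ ((1:ℝ)/2)) := by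
          rw [lintegral_const_mul' _ _ ofReal_ne_top, lint_Ioc (by positivity)]
      _ = ENNReal.ofReal ((4 * Real.pi) ^ p * 16 * r ^ (-(2:ℝ))) := by
          rw [← ENNReal.ofReal_mul (by positivity)]
          congr 1
          have e2 : ((r:ℝ) ^ 2) ^ ((1:ℝ)/2) = r := by
            rw [← Real.rpow_natCast r 2, ← Real.rpow_mul hr.le]
            norm_num
          have e3 : (r:ℝ) ^ (-(2:ℝ)) = (r ^ 2)⁻¹ := by
            rw [← Real.rpow_natCast r 2, ← Real.rpow_neg hr.le]
            norm_num
          rw [e2, e3]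
          field_simp
          ring
  have int2 : ∫⁻ τ in Ioi ((r:ℝ) ^ 2), G τ ≤
      ENNReal.ofReal ((4 * Real.pi) ^ p * (1/3) * r ^ (-(2:ℝ))) := by
    calc ∫⁻ τ in Ioi ((r:ℝ) ^ 2), G τ
        ≤ ∫⁻ τ in Ioi ((r:ℝ) ^ 2),
            ENNReal.ofReal ((4 * Real.pi) ^ p * (r / 2)) * ENNReal.ofReal (τ ^ (-(5:ℝ)/2)) := by
          apply setLIntegral_mono' measurableSet_Ioi
          intro τ hτ
          rw [← ENNReal.ofReal_mul (by positivity)]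
          exact bnd2 τ hτ
      _ = ENNReal.ofReal ((4 * Real.pi) ^ p * (r / 2)) *
            ENNReal.ofReal (2/3 * ((r:ℝ) ^ 2) ^ (-(3:ℝ)/2)) := by
          rw [lintegral_const_mul' _ _ ofReal_ne_top, lint_Ioi (by positivity)]
      _ = ENNReal.ofReal ((4 * Real.pi) ^ p * (1/3) * r ^ (-(2:ℝ))) := by
          rw [← ENNReal.ofReal_mul (by positivity)]
          congr 1
          have e2 : (((r:ℝ) ^ 2)) ^ (-(3:ℝ)/2) = (r ^ 3)⁻¹ := by
            rw [← Real.rpow_natCast r 2, ← Real.rpow_mul hr.le]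
            rw [show (((2:ℕ):ℝ) * (-(3:ℝ)/2)) = -((3:ℕ):ℝ) by norm_num]
            rw [Real.rpow_neg hr.le, Real.rpow_natCast]
          have e3 : (r:ℝ) ^ (-(2:ℝ)) = (r ^ 2)⁻¹ := by
            rw [← Real.rpow_natCast r 2, ← Real.rpow_neg hr.le]
            norm_num
          rw [e2, e3]
          field_simp
  calc ∫⁻ s in Ioo 0 t, G (t - s) ≤ ∫⁻ τ in Ioi 0, G τ := step1
    _ = (∫⁻ τ in Ioc (0:ℝ) (r ^ 2), G τ) + ∫⁻ τ in Ioi (r ^ 2), G τ := hsplit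
    _ ≤ ENNReal.ofReal ((4 * Real.pi) ^ p * 16 * r ^ (-(2:ℝ))) +
        ENNReal.ofReal ((4 * Real.pi) ^ p * (1/3) * r ^ (-(2:ℝ))) := add_le_add int1 int2
    _ ≤ ENNReal.ofReal ((4 * Real.pi) ^ p * 17) * ENNReal.ofReal (r ^ (-(2:ℝ))) := by
        rw [← ENNReal.ofReal_add (by positivity) (by positivity),
          ← ENNReal.ofReal_mul (by positivity)]
        apply ENNReal.ofReal_le_ofReal
        have h1 : (0:ℝ) ≤ r ^ (-(2:ℝ)) := Real.rpow_nonneg hr.le _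
        have e : (4 * Real.pi) ^ p * 16 * r ^ (-(2:ℝ)) + (4 * Real.pi) ^ p * (1/3) * r ^ (-(2:ℝ))
            = ((4 * Real.pi) ^ p * (16 + 1/3)) * r ^ (-(2:ℝ)) := by ring
        rw [e, mul_comm ((4 * Real.pi) ^ p) 17]
        rw [show (17 * (4 * Real.pi) ^ p) * r ^ (-(2:ℝ)) = ((4 * Real.pi) ^ p * 17) * r ^ (-(2:ℝ)) by ring]
        apply mul_le_mul_of_nonneg_right _ h1
        apply mul_le_mul_of_nonneg_left (by norm_num) hp4.le


end DuhamelHelpers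

open Set in
/-- **Pointwise Duhamel estimate via the Riesz potential:** there is `C > 0` so that for
every measurable `v : (0,∞) × ℝ³ → [0,∞]`, every `t > 0` and every `x ∈ ℝ³`,
`∫₀^t ∫ |∇g_{t-s}(x-y)| v(s,y) dy ds ≤ C ∫ |x-y|⁻² (ess sup_{s>0} v(s,y)) dy`. -/
theorem stmt12 :
    ∃ C : ℝ, 0 < C ∧ ∀ v : ℝ → EuclideanSpace ℝ (Fin 3) → ℝ≥0∞,
      Measurable (Function.uncurry v) →
      ∀ t : ℝ, 0 < t → ∀ x : EuclideanSpace ℝ (Fin 3),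
        (∫⁻ s in Set.Ioo (0 : ℝ) t, ∫⁻ y,
            ENNReal.ofReal ‖gradient (heatKernel (t - s)) (x - y)‖ * v s y)
          ≤ ENNReal.ofReal C * ∫⁻ y, ENNReal.ofReal (‖x - y‖ ^ (-(2 : ℝ))) *
              essSup (fun s => v s y) (volume.restrict (Set.Ioi (0 : ℝ))) := by
  refine ⟨(4 * Real.pi) ^ (-(3:ℝ)/2) * 17, by positivity, ?_⟩
  intro v hv t ht x
  set C : ℝ := (4 * Real.pi) ^ (-(3:ℝ)/2) * 17 with hC
  set H : ℝ → E3 → ℝ≥0∞ := fun s y =>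
    ENNReal.ofReal (heatKernel (t - s) (x - y) * ((2 * (t - s))⁻¹ * ‖x - y‖)) * v s y with hH
  have hHm : Measurable (Function.uncurry H) := by
    apply Measurable.mul _ hv
    unfold heatKernel
    fun_prop
  have stepA : (∫⁻ s in Ioo (0 : ℝ) t, ∫⁻ y,
      ENNReal.ofReal ‖gradient (heatKernel (t - s)) (x - y)‖ * v s y)
      = ∫⁻ s in Ioo (0 : ℝ) t, ∫⁻ y, H s y := by
    apply setLIntegral_congr_fun measurableSet_Ioo
    intro s hs
    apply lintegral_congr
    intro y
    rw [hH]
    simp only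
    rw [norm_grad_hk (by linarith [hs.2] : (0:ℝ) < t - s)]
  have stepB : (∫⁻ s in Ioo (0 : ℝ) t, ∫⁻ y, H s y) = ∫⁻ y, ∫⁻ s in Ioo (0 : ℝ) t, H s y := by
    apply lintegral_lintegral_swap
    exact hHm.aemeasurable
  have stepC : ∀ y : E3, (∫⁻ s in Ioo (0 : ℝ) t, H s y) ≤
      ENNReal.ofReal C * (ENNReal.ofReal (‖x - y‖ ^ (-(2:ℝ))) *
        essSup (fun s => v s y) (volume.restrict (Ioi (0:ℝ)))) := by
    intro y
    set Ey := essSup (fun s => v s y) (volume.restrict (Ioi (0:ℝ))) with hEy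
    set K : ℝ → ℝ≥0∞ := fun s =>
      ENNReal.ofReal (heatKernel (t - s) (x - y) * ((2 * (t - s))⁻¹ * ‖x - y‖)) with hK
    have hKm : Measurable K := by
      rw [hK]; unfold heatKernel
      fun_prop
    have hae : ∀ᵐ s ∂(volume.restrict (Ioo (0:ℝ) t)), v s y ≤ Ey :=
      ae_restrict_of_ae_restrict_of_subset Ioo_subset_Ioi_self (ENNReal.ae_le_essSup _)
    calc (∫⁻ s in Ioo (0 : ℝ) t, H s y) ≤ ∫⁻ s in Ioo (0 : ℝ) t, K s * Ey := by
          apply lintegral_mono_ae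
          filter_upwards [hae] with s hs
          exact mul_le_mul_right hs _
      _ = (∫⁻ s in Ioo (0 : ℝ) t, K s) * Ey := lintegral_mul_const'' _ hKm.aemeasurable
      _ ≤ (ENNReal.ofReal C * ENNReal.ofReal (‖x - y‖ ^ (-(2:ℝ)))) * Ey := by
          apply mul_le_mul_left
          exact timeInt (x - y) t
      _ = ENNReal.ofReal C * (ENNReal.ofReal (‖x - y‖ ^ (-(2:ℝ))) * Ey) := by ring
  calc (∫⁻ s in Ioo (0 : ℝ) t, ∫⁻ y,
      ENNReal.ofReal ‖gradient (heatKernel (t - s)) (x - y)‖ * v s y)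
      = ∫⁻ y, ∫⁻ s in Ioo (0 : ℝ) t, H s y := by rw [stepA, stepB]
    _ ≤ ∫⁻ y, ENNReal.ofReal C * (ENNReal.ofReal (‖x - y‖ ^ (-(2:ℝ))) *
          essSup (fun s => v s y) (volume.restrict (Ioi (0:ℝ)))) := lintegral_mono stepC
    _ = ENNReal.ofReal C * ∫⁻ y, ENNReal.ofReal (‖x - y‖ ^ (-(2:ℝ))) *
          essSup (fun s => v s y) (volume.restrict (Ioi (0:ℝ))) :=
        lintegral_const_mul' _ _ ofReal_ne_top
end
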